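/- For every w ∈ ℂ with Q_n(w) ≠ 0, the matrix w I_n − J_n is invertible and the (0,0) entry of (w I_n − J_n)^{−1} equals P_n(w)/Q_n(w). -/

import Mathlib

open Polynomial

/-- The `n × n` tridiagonal matrix `J_n` with diagonal entries `c_0, …, c_{n−1}`,
subdiagonal entries `d_1, …, d_{n−1}` (the entry in row `i`, column `i−1` is `d_i`),
and all superdiagonal entries equal to `1`. -/
noncomputable def Jmat (n : ℕ) (c d : ℕ → ℂ) : Matrix (Fin n) (Fin n) ℂ :=
  Matrix.of fun i j =>
    if (i : ℕ) = (j : ℕ) then c i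
    else if (i : ℕ) + 1 = (j : ℕ) then 1
    else if (i : ℕ) = (j : ℕ) + 1 then d i
    else 0

/-- `Q_0 = 1`, `Q_1 = w − c_0`, `Q_{l+1} = (w − c_l) Q_l − d_l Q_{l−1}`. -/
noncomputable def Qpoly (c d : ℕ → ℂ) : ℕ → Polynomial ℂ
  | 0 => 1
  | 1 => X - C (c 0)
  | l + 2 => (X - C (c (l + 1))) * Qpoly c d (l + 1) - C (d (l + 1)) * Qpoly c d l

/-- `P_0 = 0`, `P_1 = 1`, `P_{l+1} = (w − c_l) P_l − d_l P_{l−1}`. -/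
noncomputable def Ppoly (c d : ℕ → ℂ) : ℕ → Polynomial ℂ
  | 0 => 0
  | 1 => 1
  | l + 2 => (X - C (c (l + 1))) * Ppoly c d (l + 1) - C (d (l + 1)) * Ppoly c d l

/-- The resolvent-type matrix `w I − J`. -/
noncomputable def Amat (n : ℕ) (c d : ℕ → ℂ) (w : ℂ) : Matrix (Fin n) (Fin n) ℂ :=
  w • (1 : Matrix (Fin n) (Fin n) ℂ) - Jmat n c d

lemma Amat_apply (n : ℕ) (c d : ℕ → ℂ) (w : ℂ) (i j : Fin n) :
    Amat n c d w i j =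
      if (i : ℕ) = (j : ℕ) then w - c i
      else if (i : ℕ) + 1 = (j : ℕ) then -1
      else if (i : ℕ) = (j : ℕ) + 1 then -d i
      else 0 := by
  have hij : (i = j) ↔ ((i : ℕ) = (j : ℕ)) := Fin.ext_iff
  simp only [Amat, Matrix.sub_apply, Matrix.smul_apply, Matrix.one_apply, Jmat, Matrix.of_apply,
    smul_eq_mul, mul_ite, mul_one, mul_zero]
  by_cases h : (i : ℕ) = (j : ℕ)
  · simp [hij.mpr h, h]
  · have hne : i ≠ j := fun e => h (congrArg Fin.val e)
    rw [if_neg hne, if_neg h, if_neg h]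
    split_ifs <;> ring

/-- The "front" recursion for `Qpoly`. -/
lemma Qpoly_front : ∀ (m : ℕ) (c d : ℕ → ℂ),
    Qpoly c d (m + 2)
      = (X - C (c 0)) * Qpoly (fun k => c (k + 1)) (fun k => d (k + 1)) (m + 1)
        - C (d 1) * Qpoly (fun k => c (k + 2)) (fun k => d (k + 2)) m := by
  intro m
  induction m using Nat.twoStepInduction with
  | zero => intro c d; simp only [Qpoly]; ring
  | one => intro c d; simp only [Qpoly]; ring
  | more m ih1 ih2 =>
    intro c d
    have h1 := ih1 c d
    have h2 := ih2 c d
    show (X - C (c (m + 3))) * Qpoly c d (m + 3) - C (d (m + 3)) * Qpoly c d (m + 2) = _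
    rw [h1, h2]
    show _ = (X - C (c 0)) *
        ((X - C (c (m + 3))) * Qpoly (fun k => c (k + 1)) (fun k => d (k + 1)) (m + 2)
          - C (d (m + 3)) * Qpoly (fun k => c (k + 1)) (fun k => d (k + 1)) (m + 1))
        - C (d 1) *
        ((X - C (c (m + 3))) * Qpoly (fun k => c (k + 2)) (fun k => d (k + 2)) (m + 1)
          - C (d (m + 3)) * Qpoly (fun k => c (k + 2)) (fun k => d (k + 2)) m)
    ring

/-- `P_{m+1}` for `(c,d)` equals `Q_m` for the shifted sequences. -/
lemma Ppoly_eq_Qpoly_shift : ∀ (m : ℕ) (c d : ℕ → ℂ),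
    Ppoly c d (m + 1) = Qpoly (fun k => c (k + 1)) (fun k => d (k + 1)) m := by
  intro m
  induction m using Nat.twoStepInduction with
  | zero => intro c d; rfl
  | one => intro c d; simp [Ppoly, Qpoly]
  | more m ih1 ih2 =>
    intro c d
    show (X - C (c (m + 2))) * Ppoly c d (m + 2) - C (d (m + 2)) * Ppoly c d (m + 1) = _
    rw [ih1 c d, ih2 c d]
    rfl

lemma det_Amat (w : ℂ) : ∀ (n : ℕ) (c d : ℕ → ℂ),
    (Amat n c d w).det = eval w (Qpoly c d n) := by
  intro n
  induction n using Nat.twoStepInduction with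
  | zero => intro c d; simp [Matrix.det_fin_zero, Qpoly]
  | one => intro c d; rw [Matrix.det_fin_one]; simp [Amat_apply, Qpoly]
  | more n ih0 ih1 =>
    intro c d
    have hsub1 : (Amat (n + 2) c d w).submatrix Fin.succ ((0 : Fin (n + 2)).succAbove)
        = Amat (n + 1) (fun k => c (k + 1)) (fun k => d (k + 1)) w := by
      ext i j
      simp only [Matrix.submatrix_apply, Fin.succAbove_zero, Amat_apply, Fin.val_succ]
      have e1 : (i : ℕ) + 1 = (j : ℕ) + 1 ↔ (i : ℕ) = (j : ℕ) := by omega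
      have e2 : (i : ℕ) + 1 + 1 = (j : ℕ) + 1 ↔ (i : ℕ) + 1 = (j : ℕ) := by omega
      have e3 : (i : ℕ) + 1 = (j : ℕ) + 1 + 1 ↔ (i : ℕ) = (j : ℕ) + 1 := by omega
      simp only [e1, e2, e3]
    have hsub2 : ((Amat (n + 2) c d w).submatrix Fin.succ
          ((Fin.succ (0 : Fin (n + 1))).succAbove)).submatrix
          ((0 : Fin (n + 1)).succAbove) Fin.succ
        = Amat n (fun k => c (k + 2)) (fun k => d (k + 2)) w := by
      ext i j
      simp only [Matrix.submatrix_apply, Fin.succAbove_zero, Fin.succ_succAbove_succ,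
        Amat_apply, Fin.val_succ]
      have e1 : (i : ℕ) + 1 + 1 = (j : ℕ) + 1 + 1 ↔ (i : ℕ) = (j : ℕ) := by omega
      have e2 : (i : ℕ) + 1 + 1 + 1 = (j : ℕ) + 1 + 1 ↔ (i : ℕ) + 1 = (j : ℕ) := by omega
      have e3 : (i : ℕ) + 1 + 1 = (j : ℕ) + 1 + 1 + 1 ↔ (i : ℕ) = (j : ℕ) + 1 := by omega
      simp only [e1, e2, e3]
    rw [Matrix.det_succ_row_zero, Fin.sum_univ_succ, Fin.sum_univ_succ]
    have htail : ∀ j : Fin n,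
        (-1 : ℂ) ^ ((j.succ.succ : Fin (n + 2)) : ℕ) * Amat (n + 2) c d w 0 j.succ.succ *
          ((Amat (n + 2) c d w).submatrix Fin.succ (j.succ.succ).succAbove).det = 0 := by
      intro j
      have : Amat (n + 2) c d w 0 j.succ.succ = 0 := by
        rw [Amat_apply]
        simp only [Fin.val_zero, Fin.val_succ]
        split_ifs <;> first | rfl | (simp_all <;> omega)
      rw [this, mul_zero, zero_mul]
    rw [Finset.sum_congr rfl (fun j _ => htail j), Finset.sum_const_zero, add_zero]
    have hA00 : Amat (n + 2) c d w 0 0 = w - c 0 := by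
      rw [Amat_apply]; simp
    have hA01 : Amat (n + 2) c d w 0 (Fin.succ 0) = -1 := by
      rw [Amat_apply]; simp
    rw [hA00, hA01, hsub1]
    -- expand the second minor along its first column
    rw [Matrix.det_succ_column_zero ((Amat (n + 2) c d w).submatrix Fin.succ
      ((Fin.succ (0 : Fin (n + 1))).succAbove)), Fin.sum_univ_succ]
    have hB00 : (Amat (n + 2) c d w).submatrix Fin.succ
        ((Fin.succ (0 : Fin (n + 1))).succAbove) 0 0 = -d 1 := by
      simp only [Matrix.submatrix_apply, Fin.succ_succAbove_zero]
      rw [Amat_apply]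
      simp
    have htail2 : ∀ i : Fin n,
        (-1 : ℂ) ^ ((i.succ : Fin (n + 1)) : ℕ) *
          (Amat (n + 2) c d w).submatrix Fin.succ
            ((Fin.succ (0 : Fin (n + 1))).succAbove) i.succ 0 *
          (((Amat (n + 2) c d w).submatrix Fin.succ
            ((Fin.succ (0 : Fin (n + 1))).succAbove)).submatrix
              (i.succ).succAbove Fin.succ).det = 0 := by
      intro i
      have : (Amat (n + 2) c d w).submatrix Fin.succ
          ((Fin.succ (0 : Fin (n + 1))).succAbove) i.succ 0 = 0 := by
        simp only [Matrix.submatrix_apply, Fin.succ_succAbove_zero]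
        rw [Amat_apply]
        simp only [Fin.val_succ, Fin.val_zero]
        split_ifs <;> first | rfl | (simp_all <;> omega)
      rw [this, mul_zero, zero_mul]
    rw [Finset.sum_congr rfl (fun i _ => htail2 i), Finset.sum_const_zero, add_zero]
    rw [hB00, hsub2, ih1 (fun k => c (k + 1)) (fun k => d (k + 1)),
      ih0 (fun k => c (k + 2)) (fun k => d (k + 2))]
    rw [Qpoly_front n c d]
    simp only [eval_sub, eval_mul, eval_X, eval_C, Fin.val_zero, Fin.val_succ, pow_zero,
      pow_succ, pow_one]
    ring

/-- For every `w ∈ ℂ` with `Q_n(w) ≠ 0`, the matrix `w I_n − J_n` is invertible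
and its `(0,0)` entry of the inverse equals `P_n(w)/Q_n(w)`. -/
theorem resolvent_entry (n : ℕ) (hn : 1 ≤ n) (c d : ℕ → ℂ) (w : ℂ)
    (hw : eval w (Qpoly c d n) ≠ 0) :
    IsUnit (w • (1 : Matrix (Fin n) (Fin n) ℂ) - Jmat n c d) ∧
    (w • (1 : Matrix (Fin n) (Fin n) ℂ) - Jmat n c d)⁻¹ ⟨0, hn⟩ ⟨0, hn⟩
      = eval w (Ppoly c d n) / eval w (Qpoly c d n) := by
  obtain ⟨m, rfl⟩ : ∃ m, n = m + 1 := ⟨n - 1, (Nat.succ_pred_eq_of_pos hn).symm⟩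
  have hA : w • (1 : Matrix (Fin (m + 1)) (Fin (m + 1)) ℂ) - Jmat (m + 1) c d
      = Amat (m + 1) c d w := rfl
  have hdet : (Amat (m + 1) c d w).det = eval w (Qpoly c d (m + 1)) := det_Amat w _ c d
  have hdet' : (Amat (m + 1) c d w).det ≠ 0 := by rw [hdet]; exact hw
  have hu : IsUnit (Amat (m + 1) c d w) := by
    rw [Matrix.isUnit_iff_isUnit_det]
    exact isUnit_iff_ne_zero.mpr hdet'
  refine ⟨hA ▸ hu, ?_⟩
  rw [hA]
  have h0 : (⟨0, hn⟩ : Fin (m + 1)) = 0 := rfl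
  rw [h0, Matrix.inv_def, Matrix.smul_apply,
    Matrix.adjugate_fin_succ_eq_det_submatrix, Ring.inverse_eq_inv']
  have hsub : (Amat (m + 1) c d w).submatrix ((0 : Fin (m + 1)).succAbove)
      ((0 : Fin (m + 1)).succAbove)
      = Amat m (fun k => c (k + 1)) (fun k => d (k + 1)) w := by
    ext i j
    simp only [Matrix.submatrix_apply, Fin.succAbove_zero, Amat_apply, Fin.val_succ]
    have e1 : (i : ℕ) + 1 = (j : ℕ) + 1 ↔ (i : ℕ) = (j : ℕ) := by omega
    have e2 : (i : ℕ) + 1 + 1 = (j : ℕ) + 1 ↔ (i : ℕ) + 1 = (j : ℕ) := by omega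
    have e3 : (i : ℕ) + 1 = (j : ℕ) + 1 + 1 ↔ (i : ℕ) = (j : ℕ) + 1 := by omega
    simp only [e1, e2, e3]
  rw [hsub, det_Amat w m, ← Ppoly_eq_Qpoly_shift m c d, hdet]
  simp [smul_eq_mul, div_eq_mul_inv, mul_comm]
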